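/- Let J ≥ 1, let μ₁, …, μ_J be strictly negative real numbers, set M = max_i {μ_i²/2} and G(c) = Σ_{i=1}^J Φ(μ_i/2 + c/μ_i). Let q ∈ (0,1) satisfy q ≤ G(M)/J, and let c be the unique real number with G(c) = Jq. Then c ≥ M, and the Spjøtvoll weights w_i = Φ(μ_i/2 + c/μ_i)/q are monotone increasing in |μ_i|: if |μ_i| ≤ |μ_j| then w_i ≤ w_j. -/
import Mathlib

open MeasureTheory

/-- The standard normal cumulative distribution function. -/
noncomputable def Phi (x : ℝ) : ℝ :=
  ∫ t in Set.Iic x, (Real.sqrt (2 * Real.pi))⁻¹ * Real.exp (-t ^ 2 / 2)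

lemma gauss_integrable :
    Integrable (fun t : ℝ => (Real.sqrt (2 * Real.pi))⁻¹ * Real.exp (-t ^ 2 / 2)) := by
  have h : Integrable (fun t : ℝ => Real.exp (-(1/2) * t ^ 2)) :=
    integrable_exp_neg_mul_sq (by norm_num)
  have h' : Integrable (fun t : ℝ => Real.exp (-t ^ 2 / 2)) := by
    convert h using 2 with t; ring_nf
  exact h'.const_mul _

lemma gauss_pos (t : ℝ) : 0 < (Real.sqrt (2 * Real.pi))⁻¹ * Real.exp (-t ^ 2 / 2) := by
  have : 0 < Real.sqrt (2 * Real.pi) :=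
    Real.sqrt_pos.2 (by positivity)
  positivity

lemma Phi_mono : Monotone Phi := by
  intro x y h
  refine setIntegral_mono_set gauss_integrable.integrableOn ?_ ?_
  · exact Filter.Eventually.of_forall fun t => (gauss_pos t).le
  · exact HasSubset.Subset.eventuallyLE (Set.Iic_subset_Iic.2 h)

lemma Phi_strictMono : StrictMono Phi := by
  intro x y h
  have hdisj : Disjoint (Set.Iic x) (Set.Ioc x y) := by
    simp [Set.disjoint_left]
    intro a ha hxa
    linarith
  have hsplit : Set.Iic x ∪ Set.Ioc x y = Set.Iic y := Set.Iic_union_Ioc_eq_Iic h.le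
  have hunion := setIntegral_union hdisj measurableSet_Ioc
    gauss_integrable.integrableOn gauss_integrable.integrableOn
    (f := fun t : ℝ => (Real.sqrt (2 * Real.pi))⁻¹ * Real.exp (-t ^ 2 / 2)) (μ := volume)
  rw [hsplit] at hunion
  have hpos : 0 < ∫ t in Set.Ioc x y, (Real.sqrt (2 * Real.pi))⁻¹ * Real.exp (-t ^ 2 / 2) := by
    have := intervalIntegral.intervalIntegral_pos_of_pos_on
      (f := fun t : ℝ => (Real.sqrt (2 * Real.pi))⁻¹ * Real.exp (-t ^ 2 / 2))
      gauss_integrable.intervalIntegrable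
      (fun t _ => gauss_pos t) h
    rwa [intervalIntegral.integral_of_le h.le] at this
  show Phi x < Phi y
  unfold Phi
  rw [hunion]
  linarith

/-- Monotonicity of one-sided Spjøtvoll weights for small `q`: with `M = max μᵢ²/2` and
`G(c) = Σᵢ Φ(μᵢ/2 + c/μᵢ)`, if `q ≤ G(M)/J` and `c` solves `G(c) = Jq`, then `c ≥ M`
and the weights `wᵢ = Φ(μᵢ/2 + c/μᵢ)/q` are monotone increasing in `|μᵢ|`. -/
theorem stmt_10 (J : ℕ) (hJ : 1 ≤ J) (μ : Fin J → ℝ) (hμ : ∀ i, μ i < 0)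
    (M : ℝ) (hM_le : ∀ i, (μ i) ^ 2 / 2 ≤ M) (hM_eq : ∃ i, M = (μ i) ^ 2 / 2)
    (q : ℝ) (hq : q ∈ Set.Ioo (0 : ℝ) 1)
    (hq_small : q ≤ (∑ i, Phi (μ i / 2 + M / μ i)) / J)
    (c : ℝ) (hc : ∑ i, Phi (μ i / 2 + c / μ i) = J * q) :
    M ≤ c ∧
    ∀ i j, |μ i| ≤ |μ j| →
      Phi (μ i / 2 + c / μ i) / q ≤ Phi (μ j / 2 + c / μ j) / q := by
  have hJ0 : (0:ℝ) < J := by exact_mod_cast hJ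
  have hMc : M ≤ c := by
    by_contra hcon
    push_neg at hcon
    have hlt : ∀ i ∈ Finset.univ, Phi (μ i / 2 + M / μ i) < Phi (μ i / 2 + c / μ i) := by
      intro i _
      exact Phi_strictMono (by linarith [div_lt_div_of_neg_of_lt (hμ i) hcon])
    have hsum : ∑ i, Phi (μ i / 2 + M / μ i) < ∑ i, Phi (μ i / 2 + c / μ i) :=
      Finset.sum_lt_sum_of_nonempty
        (Finset.univ_nonempty_iff.2 (Fin.pos_iff_nonempty.1 hJ)) hlt
    have hle : (J:ℝ) * q ≤ ∑ i, Phi (μ i / 2 + M / μ i) := by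
      have := (le_div_iff₀ hJ0).1 hq_small
      linarith
    linarith [hc]
  refine ⟨hMc, fun i j hij => ?_⟩
  have hi := hμ i
  have hj := hμ j
  have hij' : μ j ≤ μ i := by
    rw [abs_of_neg hi, abs_of_neg hj] at hij
    linarith
  have h2c : μ j ^ 2 ≤ 2 * c := by
    have := hM_le j
    linarith
  have hp : 0 < μ i * μ j := mul_pos_of_neg_of_neg hi hj
  have hple : μ i * μ j ≤ 2 * c := by nlinarith
  have key : μ i / 2 + c / μ i ≤ μ j / 2 + c / μ j := by
    rw [← sub_nonneg]
    have heq : (μ j / 2 + c / μ j) - (μ i / 2 + c / μ i)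
        = (μ i - μ j) * (c / (μ i * μ j) - 1/2) := by
      field_simp [hi.ne, hj.ne]
      ring
    rw [heq]
    apply mul_nonneg (by linarith)
    rw [sub_nonneg, le_div_iff₀ hp]
    linarith
  have hq0 := hq.1
  gcongr
  exact Phi_mono key
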